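/- The function x ↦ 1/(e^x - 1) - x/(e^x - 1)² is decreasing on (0,∞). -/

import Mathlib

theorem decreasing_aux :
    StrictAntiOn (fun x : ℝ => 1 / (Real.exp x - 1) - x / (Real.exp x - 1) ^ 2)
      (Set.Ioi 0) := by
  apply strictAntiOn_of_deriv_neg (convex_Ioi 0)
  · apply ContinuousOn.sub
    · apply ContinuousOn.div continuousOn_const
        ((Real.continuous_exp.continuousOn).sub continuousOn_const)
      intro x hx
      have h := Real.add_one_lt_exp (ne_of_gt (show (0:ℝ) < x from hx))
      intro h'
      change Real.exp x - 1 = 0 at h'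
      simp at hx
      linarith
    · apply ContinuousOn.div continuous_id.continuousOn
        (((Real.continuous_exp.continuousOn).sub continuousOn_const).pow 2)
      intro x hx
      simp only [Set.mem_Ioi] at hx
      have h := Real.add_one_lt_exp (ne_of_gt hx)
      have : (0:ℝ) < Real.exp x - 1 := by linarith
      change (Real.exp x - 1) ^ 2 ≠ 0
      positivity
  · intro x hx
    rw [interior_Ioi] at hx
    have hx : (0:ℝ) < x := hx
    have hu : (0:ℝ) < Real.exp x - 1 := by
      have := Real.add_one_lt_exp (ne_of_gt hx)
      linarith
    have hu' : Real.exp x - 1 ≠ 0 := ne_of_gt hu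
    have h1 : HasDerivAt (fun x : ℝ => 1 / (Real.exp x - 1))
        ((0 * (Real.exp x - 1) - 1 * Real.exp x) / (Real.exp x - 1) ^ 2) x :=
      (hasDerivAt_const x 1).div ((Real.hasDerivAt_exp x).sub_const 1) hu'
    have hden : HasDerivAt (fun x : ℝ => (Real.exp x - 1) ^ 2)
        (2 * (Real.exp x - 1) ^ 1 * Real.exp x) x := by
      have := ((Real.hasDerivAt_exp x).sub_const 1).fun_pow 2
      simpa using this
    have h2 : HasDerivAt (fun x : ℝ => x / (Real.exp x - 1) ^ 2)
        ((1 * (Real.exp x - 1) ^ 2 - x * (2 * (Real.exp x - 1) ^ 1 * Real.exp x)) /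
          ((Real.exp x - 1) ^ 2) ^ 2) x :=
      (hasDerivAt_id x).div hden (pow_ne_zero 2 hu')
    have h := h1.fun_sub h2
    rw [h.deriv]
    have hsinh : x < Real.sinh x := Real.self_lt_sinh_iff.mpr hx
    rw [Real.sinh_eq] at hsinh
    have hinv : Real.exp x * Real.exp (-x) = 1 := by
      rw [← Real.exp_add]; simp
    have hnum : 1 + 2 * x * Real.exp x - Real.exp x * Real.exp x < 0 := by
      nlinarith [Real.exp_pos x, Real.exp_pos (-x)]
    have heq : (0 * (Real.exp x - 1) - 1 * Real.exp x) / (Real.exp x - 1) ^ 2 -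
        (1 * (Real.exp x - 1) ^ 2 - x * (2 * (Real.exp x - 1) ^ 1 * Real.exp x)) /
          ((Real.exp x - 1) ^ 2) ^ 2 =
        (1 + 2 * x * Real.exp x - Real.exp x * Real.exp x) / (Real.exp x - 1) ^ 3 := by
      field_simp
      ring
    rw [heq]
    exact div_neg_of_neg_of_pos hnum (by positivity)
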